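/- The softmax map σ : ℝ^K → ℝ^K defined by σ(z)_k = exp(z_k) / ∑_{j=1}^K exp(z_j) is Lipschitz continuous with constant 1 with respect to the Euclidean (ℓ²) norm: for all z, z' ∈ ℝ^K, ‖σ(z) − σ(z')‖₂ ≤ ‖z − z'‖₂. -/

import Mathlib

/-- The softmax map `σ : ℝ^K → ℝ^K`, `σ(z)_k = exp(z_k) / ∑_j exp(z_j)`,
viewed as a map of Euclidean space (ℓ² norm). -/
noncomputable def softmax {K : ℕ} (z : EuclideanSpace ℝ (Fin K)) :
    EuclideanSpace ℝ (Fin K) :=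
  WithLp.toLp 2 (fun k => Real.exp (z k) / ∑ j, Real.exp (z j))

variable {K : ℕ}

lemma expSum_pos (hK : 1 ≤ K) (z : EuclideanSpace ℝ (Fin K)) :
    0 < ∑ j, Real.exp (z j) := by
  apply Finset.sum_pos (fun j _ => Real.exp_pos _)
  simp [Finset.univ_nonempty_iff, ← Fin.pos_iff_nonempty]
  omega

lemma softmax_nonneg (hK : 1 ≤ K) (z : EuclideanSpace ℝ (Fin K)) (k : Fin K) :
    0 ≤ softmax z k := by
  show 0 ≤ Real.exp (z k) / ∑ j, Real.exp (z j)
  exact div_nonneg (Real.exp_pos _).le (expSum_pos hK z).le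

lemma softmax_le_one (hK : 1 ≤ K) (z : EuclideanSpace ℝ (Fin K)) (k : Fin K) :
    softmax z k ≤ 1 := by
  simp only [softmax, WithLp.ofLp_toLp]
  rw [div_le_one (expSum_pos hK z)]
  exact Finset.single_le_sum (f := fun j => Real.exp (z j))
    (fun j _ => (Real.exp_pos _).le) (Finset.mem_univ k)

lemma softmax_sum_one (hK : 1 ≤ K) (z : EuclideanSpace ℝ (Fin K)) :
    ∑ k, softmax z k = 1 := by
  simp only [softmax, WithLp.ofLp_toLp]
  rw [← Finset.sum_div, div_self (expSum_pos hK z).ne']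

lemma smJac_bound (hK : 1 ≤ K) (z x : EuclideanSpace ℝ (Fin K)) :
    ∑ k, (softmax z k * x k - softmax z k * ∑ j, softmax z j * x j) ^ 2
      ≤ ∑ k, (x k) ^ 2 := by
  set p := softmax z with hp
  set s := ∑ j, p j * x j with hs
  have h1 : ∀ k : Fin K, (p k * x k - p k * s) ^ 2 ≤ p k * (x k - s) ^ 2 := by
    intro k
    have : (p k * x k - p k * s) ^ 2 = p k ^ 2 * (x k - s) ^ 2 := by ring
    rw [this]
    have h0 : 0 ≤ p k := softmax_nonneg hK z k
    have h2 : p k ≤ 1 := softmax_le_one hK z k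
    nlinarith [mul_nonneg (mul_nonneg h0 (sub_nonneg.mpr h2)) (sq_nonneg (x k - s))]
  calc ∑ k, (p k * x k - p k * s) ^ 2 ≤ ∑ k, p k * (x k - s) ^ 2 :=
        Finset.sum_le_sum fun k _ => h1 k
    _ = (∑ k, p k * x k ^ 2) - s ^ 2 := by
        rw [show (∑ k, p k * (x k - s) ^ 2)
            = (∑ k, (p k * x k ^ 2 - (2 * s) * (p k * x k) + s ^ 2 * p k)) by
          congr 1; funext k; ring]
        rw [Finset.sum_add_distrib, Finset.sum_sub_distrib, ← Finset.mul_sum, ← Finset.mul_sum,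
          ← hs, softmax_sum_one hK z]
        ring
    _ ≤ ∑ k, x k ^ 2 := by
        have : (∑ k, p k * x k ^ 2) ≤ ∑ k, x k ^ 2 := by
          apply Finset.sum_le_sum
          intro k _
          have h0 : 0 ≤ p k := softmax_nonneg hK z k
          have h2 : p k ≤ 1 := softmax_le_one hK z k
          nlinarith [sq_nonneg (x k)]
        nlinarith [sq_nonneg s]


noncomputable def smJacLin (z : EuclideanSpace ℝ (Fin K)) :
    EuclideanSpace ℝ (Fin K) →ₗ[ℝ] EuclideanSpace ℝ (Fin K) where
  toFun x := WithLp.toLp 2 fun k => softmax z k * x k - softmax z k * ∑ j, softmax z j * x j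
  map_add' x y := by
    ext k
    simp only [PiLp.add_apply, PiLp.toLp_apply]
    rw [show (∑ j, softmax z j * (x j + y j)) = (∑ j, softmax z j * x j) + ∑ j, softmax z j * y j by
      rw [← Finset.sum_add_distrib]; congr 1; funext j; ring]
    ring
  map_smul' c x := by
    ext k
    simp only [PiLp.toLp_apply, PiLp.smul_apply, smul_eq_mul, RingHom.id_apply]
    rw [show (∑ j, softmax z j * (c * x j)) = c * ∑ j, softmax z j * x j by
      rw [Finset.mul_sum]; congr 1; funext j; ring]
    ring

noncomputable def smJac (z : EuclideanSpace ℝ (Fin K)) :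
    EuclideanSpace ℝ (Fin K) →L[ℝ] EuclideanSpace ℝ (Fin K) :=
  LinearMap.toContinuousLinearMap (smJacLin z)

@[simp] lemma smJac_apply (z x : EuclideanSpace ℝ (Fin K)) (k : Fin K) :
    smJac z x k = softmax z k * x k - softmax z k * ∑ j, softmax z j * x j := rfl

lemma smJac_norm_le (hK : 1 ≤ K) (z : EuclideanSpace ℝ (Fin K)) : ‖smJac z‖ ≤ 1 := by
  apply ContinuousLinearMap.opNorm_le_bound _ zero_le_one
  intro x
  rw [one_mul, EuclideanSpace.norm_eq, EuclideanSpace.norm_eq]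
  apply Real.sqrt_le_sqrt
  simpa [Real.norm_eq_abs, sq_abs] using smJac_bound hK z x

open ContinuousLinearMap in
lemma hasFDerivAt_softmax (hK : 1 ≤ K) (z : EuclideanSpace ℝ (Fin K)) :
    HasFDerivAt softmax (smJac z) z := by
  set e := PiLp.continuousLinearEquiv 2 ℝ (fun _ : Fin K => ℝ) with he
  set S : ℝ := ∑ j, Real.exp (z j) with hSdef
  have hS0 : (0:ℝ) < S := expSum_pos hK z
  have hF : HasFDerivAt (fun w : Fin K → ℝ => (fun k => Real.exp (w k) / ∑ j, Real.exp (w j)))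
      ((e : EuclideanSpace ℝ (Fin K) →L[ℝ] (Fin K → ℝ)).comp
        ((smJac z).comp (e.symm : (Fin K → ℝ) →L[ℝ] EuclideanSpace ℝ (Fin K)))) (e z) := by
    rw [hasFDerivAt_pi']
    intro k
    have hk : HasFDerivAt (fun w : Fin K → ℝ => Real.exp (w k))
        (Real.exp (z k) • proj k) (e z) := (hasFDerivAt_apply k (e z)).exp
    have hsum : HasFDerivAt (fun w : Fin K → ℝ => ∑ j, Real.exp (w j))
        (∑ j, Real.exp (z j) • (proj j : (Fin K → ℝ) →L[ℝ] ℝ)) (e z) :=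
      HasFDerivAt.fun_sum fun j _ => (hasFDerivAt_apply j (e z)).exp
    have hinv : HasDerivAt (fun y : ℝ => y⁻¹) (-(S ^ 2)⁻¹) S := hasDerivAt_inv hS0.ne'
    have hinv' : HasFDerivAt (fun w : Fin K → ℝ => (∑ j, Real.exp (w j))⁻¹)
        ((-(S ^ 2)⁻¹) • ∑ j, Real.exp (z j) • (proj j : (Fin K → ℝ) →L[ℝ] ℝ)) (e z) :=
      hinv.comp_hasFDerivAt (e z) hsum
    have hmul := hk.fun_mul hinv'
    have hfun : (fun w : Fin K → ℝ => Real.exp (w k) / ∑ j, Real.exp (w j))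
        = fun w : Fin K → ℝ => Real.exp (w k) * (∑ j, Real.exp (w j))⁻¹ := by
      funext w; rw [div_eq_mul_inv]
    rw [hfun]
    refine hmul.congr_fderiv ?_
    refine (ContinuousLinearMap.ext fun x => ?_).symm
    simp only [coe_comp', Function.comp_apply, proj_apply, add_apply, smul_apply,
      coe_sum', Finset.sum_apply, smul_eq_mul, neg_mul, ContinuousLinearEquiv.coe_coe]
    have h3 : e ((smJac z) (e.symm x)) k
        = softmax z k * x k - softmax z k * ∑ j, softmax z j * x j := rfl
    rw [h3]
    show softmax z k * x k - softmax z k * ∑ j, softmax z j * x j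
        = Real.exp (z k) * -((S ^ 2)⁻¹ * ∑ j, Real.exp (z j) * x j) + S⁻¹ * (Real.exp (z k) * x k)
    simp only [softmax, WithLp.ofLp_toLp, ← hSdef]
    rw [show (∑ j, Real.exp (z j) / S * x j) = (∑ j, Real.exp (z j) * x j) / S from by
      rw [Finset.sum_div]; exact Finset.sum_congr rfl fun j _ => by ring]
    field_simp
    ring
  have h4 := (e.symm.hasFDerivAt).comp z (hF.comp z e.hasFDerivAt)
  have h5 : smJac z = ((e.symm : (Fin K → ℝ) →L[ℝ] EuclideanSpace ℝ (Fin K)).comp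
      (((e : EuclideanSpace ℝ (Fin K) →L[ℝ] (Fin K → ℝ)).comp
        ((smJac z).comp (e.symm : (Fin K → ℝ) →L[ℝ] EuclideanSpace ℝ (Fin K)))).comp
          (e : EuclideanSpace ℝ (Fin K) →L[ℝ] (Fin K → ℝ)))) :=
    ContinuousLinearMap.ext fun x => rfl
  rw [h5]
  convert h4 using 1
  all_goals rfl

/-- The softmax map is Lipschitz with constant 1 with respect to the
Euclidean (ℓ²) norm: `‖σ(z) − σ(z')‖₂ ≤ ‖z − z'‖₂`. -/
theorem softmax_lipschitz_one {K : ℕ} (hK : 1 ≤ K)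
    (z z' : EuclideanSpace ℝ (Fin K)) :
    ‖softmax z - softmax z'‖ ≤ ‖z - z'‖ := by
  have h := (convex_univ : Convex ℝ (Set.univ : Set (EuclideanSpace ℝ (Fin K)))).norm_image_sub_le_of_norm_hasFDerivWithin_le
    (f' := smJac) (fun x _ => (hasFDerivAt_softmax hK x).hasFDerivWithinAt)
    (fun x _ => smJac_norm_le hK x) (Set.mem_univ z') (Set.mem_univ z)
  simpa using h
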